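/- For any bouncing solution x of the breathing circle billiard, the angular momentum C(t) := x₁(t)·ẋ₂(t) − x₂(t)·ẋ₁(t) is constant: it takes one and the same value on all the open intervals between consecutive impact times. -/

import Mathlib

noncomputable section

/-- Euclidean dot product on `ℝ × ℝ`. -/
def dot2 (u w : ℝ × ℝ) : ℝ := u.1 * w.1 + u.2 * w.2

/-- Euclidean norm on `ℝ × ℝ`. -/
def norm2 (u : ℝ × ℝ) : ℝ := Real.sqrt (dot2 u u)

/-- A bouncing solution of the breathing circle billiard with boundary radius `R`:
a continuous trajectory `x`, a strictly increasing bi-infinite sequence of impact times `t`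
without accumulation points, and velocities `v n` on the free-flight intervals
(`ẍ = 0` between impacts means the derivative is a constant `v n` there).
At each impact the particle is on the boundary, strictly inside in between, and the
elastic impact law holds: the tangential component of the velocity is conserved and the
normal component is reflected with the impulse `2 R'(t n)` of the moving wall. -/
structure BouncingSolution (R : ℝ → ℝ) where
  x : ℝ → ℝ × ℝ
  t : ℤ → ℝ
  v : ℤ → ℝ × ℝ
  cont : Continuous x
  tmono : StrictMono t
  ttop : Filter.Tendsto t Filter.atTop Filter.atTop
  tbot : Filter.Tendsto t Filter.atBot Filter.atBot
  free : ∀ n : ℤ, ∀ s ∈ Set.Ioo (t n) (t (n + 1)), HasDerivAt x (v n) s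
  inside : ∀ n : ℤ, ∀ s ∈ Set.Ioo (t n) (t (n + 1)), norm2 (x s) < R s
  impact : ∀ n : ℤ, norm2 (x (t n)) = R (t n)
  bounce_tan : ∀ n : ℤ,
    dot2 (v n) (-(x (t n)).2 / R (t n), (x (t n)).1 / R (t n)) =
      dot2 (v (n - 1)) (-(x (t n)).2 / R (t n), (x (t n)).1 / R (t n))
  bounce_norm : ∀ n : ℤ,
    dot2 (v n) ((x (t n)).1 / R (t n), (x (t n)).2 / R (t n)) =
      -dot2 (v (n - 1)) ((x (t n)).1 / R (t n), (x (t n)).2 / R (t n)) + 2 * deriv R (t n)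

/-- For any bouncing solution of the breathing circle billiard the angular
momentum `C(t) = x₁ ẋ₂ − x₂ ẋ₁` takes one and the same value on all the open intervals
between consecutive impact times. -/
theorem angular_momentum_constant (R : ℝ → ℝ)
    (hR : ContDiff ℝ 1 R) (hpos : ∀ s, 0 < R s)
    (bs : BouncingSolution R) :
    ∃ C : ℝ, ∀ n : ℤ, ∀ s ∈ Set.Ioo (bs.t n) (bs.t (n + 1)),
      (bs.x s).1 * (bs.v n).2 - (bs.x s).2 * (bs.v n).1 = C := by
  set L : ℤ → ℝ → ℝ := fun n s =>
    (bs.x s).1 * (bs.v n).2 - (bs.x s).2 * (bs.v n).1 with hL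
  -- continuity of L n
  have hcont : ∀ n : ℤ, Continuous (L n) := by
    intro n
    exact ((bs.cont.fst.mul continuous_const).sub (bs.cont.snd.mul continuous_const))
  -- L n is constant on Icc (t n) (t (n+1))
  have hconst : ∀ n : ℤ, ∀ s ∈ Set.Icc (bs.t n) (bs.t (n + 1)), L n s = L n (bs.t n) := by
    intro n
    have hderiv : ∀ s ∈ Set.Ioo (bs.t n) (bs.t (n + 1)), HasDerivAt (L n) 0 s := by
      intro s hs
      have h := bs.free n s hs
      have h1 : HasDerivAt (fun u => (bs.x u).1) (bs.v n).1 s := h.fst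
      have h2 : HasDerivAt (fun u => (bs.x u).2) (bs.v n).2 s := h.snd
      have := (h1.mul_const (bs.v n).2).sub (h2.mul_const (bs.v n).1)
      rw [mul_comm (bs.v n).1 (bs.v n).2, sub_self] at this
      exact this
    -- constant on Ioo
    have hIoo : ∀ s ∈ Set.Ioo (bs.t n) (bs.t (n + 1)),
        ∀ s' ∈ Set.Ioo (bs.t n) (bs.t (n + 1)), L n s = L n s' := by
      intro a ha b hb
      rcases lt_trichotomy a b with hab | hab | hab
      · have := constant_of_has_deriv_right_zero (f := L n) (a := a) (b := b)
          ((hcont n).continuousOn)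
          (fun y hy => ((hderiv y ⟨lt_of_lt_of_le ha.1 hy.1, lt_of_le_of_lt
            (le_of_lt hy.2) hb.2⟩).hasDerivWithinAt))
        exact (this b ⟨le_of_lt hab, le_refl b⟩).symm
      · rw [hab]
      · have := constant_of_has_deriv_right_zero (f := L n) (a := b) (b := a)
          ((hcont n).continuousOn)
          (fun y hy => ((hderiv y ⟨lt_of_lt_of_le hb.1 hy.1, lt_of_le_of_lt
            (le_of_lt hy.2) ha.2⟩).hasDerivWithinAt))
        exact this a ⟨le_of_lt hab, le_refl a⟩
    -- extend to Icc by continuity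
    have hlt : bs.t n < bs.t (n + 1) := bs.tmono (by omega)
    obtain ⟨m, hm⟩ : ∃ m, m ∈ Set.Ioo (bs.t n) (bs.t (n + 1)) :=
      ⟨(bs.t n + bs.t (n + 1)) / 2, by constructor <;> linarith⟩
    have heq : Set.EqOn (L n) (fun _ => L n m) (Set.Ioo (bs.t n) (bs.t (n + 1))) :=
      fun y hy => hIoo y hy m hm
    have hclo : Set.EqOn (L n) (fun _ => L n m) (Set.Icc (bs.t n) (bs.t (n + 1))) := by
      have := heq.closure (hcont n) continuous_const
      rwa [closure_Ioo (ne_of_lt hlt)] at this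
    intro s hs
    rw [hclo hs, hclo ⟨le_refl _, le_of_lt hlt⟩]
  -- impact: L n (t n) = L (n-1) (t n)
  have himp : ∀ n : ℤ, L n (bs.t n) = L (n - 1) (bs.t n) := by
    intro n
    have h := bs.bounce_tan n
    have hRne : R (bs.t n) ≠ 0 := ne_of_gt (hpos _)
    simp only [dot2] at h
    field_simp at h
    have h2 : ((bs.x (bs.t n)).1 * (bs.v n).2 - (bs.x (bs.t n)).2 * (bs.v n).1) * R (bs.t n)
        = ((bs.x (bs.t n)).1 * (bs.v (n - 1)).2 - (bs.x (bs.t n)).2 * (bs.v (n - 1)).1)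
          * R (bs.t n) := by linear_combination R (bs.t n) * h
    simp only [hL]
    exact mul_right_cancel₀ hRne h2
  -- L n (t n) = L 0 (t 0) value chain
  have hchain : ∀ n : ℤ, L n (bs.t n) = L 0 (bs.t 0) := by
    have step : ∀ n : ℤ, L (n + 1) (bs.t (n + 1)) = L n (bs.t n) := by
      intro n
      have h1 : L (n + 1) (bs.t (n + 1)) = L n (bs.t (n + 1)) := by
        have := himp (n + 1)
        simpa using this
      rw [h1]
      exact hconst n _ ⟨le_of_lt (bs.tmono (by omega)), le_refl _⟩
    intro n
    induction n using Int.induction_on with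
    | zero => rfl
    | succ k ih => rw [step k, ih]
    | pred k ih => rw [← ih, ← step (-k - 1)]; norm_num
  refine ⟨L 0 (bs.t 0), fun n s hs => ?_⟩
  calc (bs.x s).1 * (bs.v n).2 - (bs.x s).2 * (bs.v n).1 = L n s := rfl
    _ = L n (bs.t n) := hconst n s ⟨le_of_lt hs.1, le_of_lt hs.2⟩
    _ = L 0 (bs.t 0) := hchain n
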